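/- For every integer $n \ge 1$ and real numbers $a > 0$, $c > 0$, $\int_0^\infty \ln(1 + a y)\, y^{n-1} e^{-c y} \, dy = (n-1)!\, e^{c/a} \sum_{k=1}^{n} \frac{1}{c^k \, a^{n-k}} \int_{c/a}^{\infty} t^{k-n-1} e^{-t} \, dt$. -/

import Mathlib

open MeasureTheory Set

namespace IntegralLogAux

open Filter

noncomputable def EI (a c : ℝ) (m j : ℕ) (y : ℝ) : ℝ :=
  y ^ m * (1 + a * y) ^ (-(j : ℤ)) * Real.exp (-c * y)

noncomputable def E (a c : ℝ) (m j : ℕ) : ℝ := ∫ y in Ioi (0:ℝ), EI a c m j y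

noncomputable def LI (a c : ℝ) (m : ℕ) (y : ℝ) : ℝ :=
  Real.log (1 + a * y) * y ^ m * Real.exp (-c * y)

noncomputable def M (a c : ℝ) (m : ℕ) : ℝ := ∫ y in Ioi (0:ℝ), LI a c m y

variable {a c : ℝ}

lemma base_pos (ha : 0 < a) {y : ℝ} (hy : 0 ≤ y) : 0 < 1 + a * y := by nlinarith

lemma base_one_le (ha : 0 < a) {y : ℝ} (hy : 0 ≤ y) : 1 ≤ 1 + a * y := by nlinarith

lemma tendsto_poly_exp (hc : 0 < c) (K : ℝ) (N : ℕ) :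
    Tendsto (fun y : ℝ => K * (1 + y) ^ N * Real.exp (-c * y)) atTop (nhds 0) := by
  have h1 : Tendsto (fun x : ℝ => x ^ N * Real.exp (-x)) atTop (nhds 0) :=
    Real.tendsto_pow_mul_exp_neg_atTop_nhds_zero N
  have h2 : Tendsto (fun y : ℝ => c * (1 + y)) atTop atTop := by
    apply Tendsto.const_mul_atTop hc
    exact tendsto_atTop_add_const_left _ _ tendsto_id
  have h3 := h1.comp h2
  have h4 : Tendsto (fun y : ℝ =>
      (K * Real.exp c / c ^ N) * ((c * (1 + y)) ^ N * Real.exp (-(c * (1 + y))))) atTop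
      (nhds ((K * Real.exp c / c ^ N) * 0)) := h3.const_mul _
  rw [mul_zero] at h4
  apply h4.congr
  intro y
  rw [mul_pow]
  have : Real.exp (-(c * (1 + y))) = Real.exp (-c) * Real.exp (-c * y) := by
    rw [← Real.exp_add]; ring_nf
  rw [this]
  have hc' : c ^ N ≠ 0 := (pow_pos hc N).ne'
  have he : Real.exp c * Real.exp (-c) = 1 := by rw [← Real.exp_add]; simp
  have hcn : c ^ N * c⁻¹ ^ N = 1 := by
    rw [← mul_pow, mul_inv_cancel₀ hc.ne', one_pow]
  ring_nf
  linear_combination (K * Real.exp (-(c*y)) * (1 + y) ^ N * (c ^ N * c⁻¹ ^ N)) * he + (K * Real.exp (-(c*y)) * (1 + y) ^ N) * hcn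


lemma tendsto_mul_exp (hc : 0 < c) (g : ℝ → ℝ) (K : ℝ) (N : ℕ)
    (hb : ∀ y : ℝ, 0 ≤ y → |g y| ≤ K * (1 + y) ^ N) :
    Tendsto (fun y => g y * Real.exp (-c * y)) atTop (nhds 0) := by
  have hG := tendsto_poly_exp hc K N
  have hGneg : Tendsto (fun y : ℝ => -(K * (1 + y) ^ N * Real.exp (-c * y))) atTop (nhds 0) := by
    simpa using hG.neg
  apply tendsto_of_tendsto_of_tendsto_of_le_of_le' hGneg hG
  · filter_upwards [eventually_ge_atTop (0:ℝ)] with y hy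
    have h1 := hb y hy
    have h2 := abs_le.1 h1
    have := Real.exp_pos (-c*y)
    nlinarith [h2.1, this.le]
  · filter_upwards [eventually_ge_atTop (0:ℝ)] with y hy
    have h2 := abs_le.1 (hb y hy)
    have := Real.exp_pos (-c*y)
    nlinarith [h2.2, this.le]

lemma integrableOn_mul_exp (hc : 0 < c) (g : ℝ → ℝ) (K : ℝ) (N : ℕ)
    (hcont : ContinuousOn g (Ici 0))
    (hb : ∀ y : ℝ, 0 ≤ y → |g y| ≤ K * (1 + y) ^ N) :
    IntegrableOn (fun y => g y * Real.exp (-c * y)) (Ioi (0:ℝ)) := by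
  apply integrable_of_isBigO_exp_neg (half_pos hc)
  · exact hcont.mul (Real.continuous_exp.comp (continuous_const.mul continuous_id)).continuousOn
  · rw [Asymptotics.isBigO_iff]
    refine ⟨1, ?_⟩
    have h0 : Tendsto (fun y : ℝ => K * (1 + y) ^ N * Real.exp (-(c/2) * y)) atTop (nhds 0) :=
      tendsto_poly_exp (half_pos hc) K N
    filter_upwards [h0.eventually (gt_mem_nhds one_pos), eventually_ge_atTop (0:ℝ)] with y h1 hy
    have hb' := hb y hy
    have he : Real.exp (-c * y) = Real.exp (-(c/2) * y) * Real.exp (-(c/2) * y) := by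
      rw [← Real.exp_add]; ring_nf
    have hep := Real.exp_pos (-(c/2) * y)
    rw [Real.norm_eq_abs, Real.norm_eq_abs, abs_mul, Real.abs_exp, Real.abs_exp, he]
    calc |g y| * (Real.exp (-(c/2)*y) * Real.exp (-(c/2)*y))
        ≤ (K * (1+y)^N) * (Real.exp (-(c/2)*y) * Real.exp (-(c/2)*y)) := by
          apply mul_le_mul_of_nonneg_right hb'
          positivity
      _ = (K * (1+y)^N * Real.exp (-(c/2)*y)) * Real.exp (-(c/2)*y) := by ring
      _ ≤ 1 * Real.exp (-(c/2)*y) := by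
          apply mul_le_mul_of_nonneg_right h1.le hep.le

lemma contOn_pow_zpow (ha : 0 < a) (m : ℕ) (j : ℕ) :
    ContinuousOn (fun y : ℝ => y ^ m * (1 + a * y) ^ (-(j:ℤ))) (Ici 0) := by
  apply (continuousOn_pow m).mul
  apply ContinuousOn.zpow₀
  · exact (continuous_const.add (continuous_const.mul continuous_id)).continuousOn
  · intro x hx
    exact Or.inl (base_pos ha hx).ne'

lemma zpow_le_one_aux (ha : 0 < a) {y : ℝ} (hy : 0 ≤ y) (j : ℕ) :
    (1 + a * y) ^ (-(j:ℤ)) ≤ 1 := by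
  have h1 := base_one_le ha hy
  have hpos := base_pos ha hy
  rw [zpow_neg, zpow_natCast]
  apply inv_le_one_of_one_le₀
  exact one_le_pow₀ h1

lemma zpow_pos_aux (ha : 0 < a) {y : ℝ} (hy : 0 ≤ y) (j : ℕ) :
    0 < (1 + a * y) ^ (-(j:ℤ)) :=
  zpow_pos (base_pos ha hy) _

lemma bound_EI (ha : 0 < a) (m j : ℕ) :
    ∀ y : ℝ, 0 ≤ y → |y ^ m * (1 + a * y) ^ (-(j:ℤ))| ≤ 1 * (1 + y) ^ m := by
  intro y hy
  have h1 := zpow_le_one_aux ha hy j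
  have h2 := (zpow_pos_aux ha hy j).le
  have h3 : (0:ℝ) ≤ y ^ m := pow_nonneg hy m
  rw [abs_of_nonneg (mul_nonneg h3 h2), one_mul]
  calc y ^ m * (1 + a*y) ^ (-(j:ℤ)) ≤ y ^ m * 1 := by
        apply mul_le_mul_of_nonneg_left h1 h3
    _ = y ^ m := mul_one _
    _ ≤ (1 + y) ^ m := by
        apply pow_le_pow_left₀ hy
        linarith

lemma integrableOn_EI (ha : 0 < a) (hc : 0 < c) (m j : ℕ) :
    IntegrableOn (EI a c m j) (Ioi (0:ℝ)) :=
  integrableOn_mul_exp hc _ 1 m (contOn_pow_zpow ha m j) (bound_EI ha m j)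

lemma log_nonneg_aux (ha : 0 < a) {y : ℝ} (hy : 0 ≤ y) : 0 ≤ Real.log (1 + a * y) :=
  Real.log_nonneg (base_one_le ha hy)

lemma log_le_aux (ha : 0 < a) {y : ℝ} (hy : 0 ≤ y) : Real.log (1 + a * y) ≤ a * y := by
  have := Real.log_le_sub_one_of_pos (base_pos ha hy)
  linarith

lemma contOn_log_pow (ha : 0 < a) (m : ℕ) :
    ContinuousOn (fun y : ℝ => Real.log (1 + a * y) * y ^ m) (Ici 0) := by
  apply ContinuousOn.mul _ (continuousOn_pow m)
  apply ContinuousOn.log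
  · exact (continuous_const.add (continuous_const.mul continuous_id)).continuousOn
  · intro x hx
    exact (base_pos ha hx).ne'

lemma bound_LI (ha : 0 < a) (m : ℕ) :
    ∀ y : ℝ, 0 ≤ y → |Real.log (1 + a * y) * y ^ m| ≤ a * (1 + y) ^ (m + 1) := by
  intro y hy
  have h0 := log_nonneg_aux ha hy
  have h1 := log_le_aux ha hy
  have h3 : (0:ℝ) ≤ y ^ m := pow_nonneg hy m
  rw [abs_of_nonneg (mul_nonneg h0 h3)]
  have hyp : y ^ m ≤ (1 + y) ^ m := by
    apply pow_le_pow_left₀ hy; linarith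
  calc Real.log (1 + a*y) * y ^ m ≤ (a * y) * y ^ m := by
        apply mul_le_mul_of_nonneg_right h1 h3
    _ ≤ (a * (1 + y)) * (1 + y) ^ m := by
        apply mul_le_mul
        · nlinarith
        · exact hyp
        · exact h3
        · positivity
    _ = a * (1 + y) ^ (m + 1) := by ring

lemma integrableOn_LI (ha : 0 < a) (hc : 0 < c) (m : ℕ) :
    IntegrableOn (LI a c m) (Ioi (0:ℝ)) :=
  integrableOn_mul_exp hc _ a (m+1) (contOn_log_pow ha m) (bound_LI ha m)


lemma hd_exp (y : ℝ) : HasDerivAt (fun y => Real.exp (-c * y)) (-c * Real.exp (-c * y)) y := by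
  have h : HasDerivAt (fun y : ℝ => -c * y) (-c) y := by
    simpa using (hasDerivAt_id y).const_mul (-c)
  simpa [mul_comm] using h.exp

lemma hd_affine (y : ℝ) : HasDerivAt (fun y : ℝ => 1 + a * y) a y := by
  simpa using ((hasDerivAt_id y).const_mul a).const_add 1

lemma hd_zpow (ha : 0 < a) (j : ℕ) {y : ℝ} (hy : 0 ≤ y) :
    HasDerivAt (fun y : ℝ => (1 + a * y) ^ (-(j:ℤ)))
      (-(j:ℝ) * (1 + a * y) ^ (-((j:ℕ)+1:ℕ):ℤ) * a) y := by
  have h1 := hasDerivAt_zpow (-(j:ℤ)) (1 + a * y) (Or.inl (base_pos ha hy).ne')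
  have h2 := h1.comp y (hd_affine y)
  refine h2.congr_deriv ?_
  have hexp : (-(j:ℤ)) - 1 = -((j:ℕ)+1:ℕ) := by push_cast; ring
  rw [← hexp]
  push_cast
  ring

lemma hd_log (ha : 0 < a) {y : ℝ} (hy : 0 ≤ y) :
    HasDerivAt (fun y : ℝ => Real.log (1 + a * y)) (a * (1 + a * y) ^ (-(1:ℕ):ℤ)) y := by
  have h1 := Real.hasDerivAt_log (base_pos ha hy).ne'
  have h2 := h1.comp y (hd_affine y)
  refine h2.congr_deriv ?_
  have : ((1:ℕ):ℤ) = 1 := rfl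
  rw [this]
  rw [zpow_neg, zpow_one]
  ring

/-- FTC recurrence for E integrals. -/
lemma ftcE (ha : 0 < a) (hc : 0 < c) (m j : ℕ) :
    ((m:ℝ)+1) * E a c m j = (j:ℝ) * a * E a c (m+1) (j+1) + c * E a c (m+1) j := by
  set F : ℝ → ℝ := fun y => y ^ (m+1) * (1 + a * y) ^ (-(j:ℤ)) * Real.exp (-c * y) with hF
  set D : ℝ → ℝ := fun y =>
    ((m:ℝ)+1) * EI a c m j y - (j:ℝ) * a * EI a c (m+1) (j+1) y - c * EI a c (m+1) j y with hD
  have hderiv : ∀ y ∈ Ici (0:ℝ), HasDerivAt F (D y) y := by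
    intro y hy
    have h1 := ((hasDerivAt_pow (m+1) y).mul (hd_zpow ha j hy)).mul (hd_exp (c := c) y)
    refine h1.congr_deriv ?_
    simp only [hD, EI, Pi.mul_apply]
    push_cast
    ring
  have htop : Tendsto F atTop (nhds 0) := by
    apply tendsto_mul_exp hc (fun y => y ^ (m+1) * (1 + a * y) ^ (-(j:ℤ))) 1 (m+1)
      (bound_EI ha (m+1) j)
  have hint : IntegrableOn D (Ioi (0:ℝ)) := by
    apply Integrable.sub
    apply Integrable.sub
    · exact (integrableOn_EI ha hc m j).const_mul _
    · exact (integrableOn_EI ha hc (m+1) (j+1)).const_mul _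
    · exact (integrableOn_EI ha hc (m+1) j).const_mul _
  have hFTC := integral_Ioi_of_hasDerivAt_of_tendsto'
    (fun y hy => hderiv y hy) hint htop
  have hF0 : F 0 = 0 := by simp [hF]
  rw [hF0, sub_zero] at hFTC
  have hsplit : ∫ y in Ioi (0:ℝ), D y
      = ((m:ℝ)+1) * E a c m j - (j:ℝ) * a * E a c (m+1) (j+1) - c * E a c (m+1) j := by
    simp only [hD]
    have i1 : IntegrableOn (fun y => ((m:ℝ)+1) * EI a c m j y) (Ioi (0:ℝ)) :=
      (integrableOn_EI ha hc m j).const_mul _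
    have i2 : IntegrableOn (fun y => (j:ℝ) * a * EI a c (m+1) (j+1) y) (Ioi (0:ℝ)) :=
      (integrableOn_EI ha hc (m+1) (j+1)).const_mul _
    have i3 : IntegrableOn (fun y => c * EI a c (m+1) j y) (Ioi (0:ℝ)) :=
      (integrableOn_EI ha hc (m+1) j).const_mul _
    have i12 : IntegrableOn
        (fun y => ((m:ℝ)+1) * EI a c m j y - (j:ℝ) * a * EI a c (m+1) (j+1) y) (Ioi (0:ℝ)) :=
      i1.sub i2
    rw [integral_sub i12 i3, integral_sub i1 i2,
      MeasureTheory.integral_const_mul, MeasureTheory.integral_const_mul, MeasureTheory.integral_const_mul]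
    rfl
  rw [hFTC] at hsplit
  have := hsplit.symm
  linarith


lemma algE (ha : 0 < a) (hc : 0 < c) (m j : ℕ) :
    a * E a c (m+1) (j+1) = E a c m j - E a c m (j+1) := by
  have h1 : a * E a c (m+1) (j+1) = ∫ y in Ioi (0:ℝ), a * EI a c (m+1) (j+1) y := by
    rw [MeasureTheory.integral_const_mul]; rfl
  rw [h1]
  simp only [E]
  rw [← integral_sub (integrableOn_EI ha hc m j) (integrableOn_EI ha hc m (j+1))]
  apply setIntegral_congr_fun measurableSet_Ioi
  intro y hy
  have hy' : (0:ℝ) ≤ y := le_of_lt hy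
  have hx := base_pos ha hy'
  simp only [EI]
  have key : (1 + a*y) ^ (-(j:ℤ)) = (1 + a*y) * (1 + a*y) ^ (-((j+1:ℕ):ℤ)) := by
    rw [← zpow_one_add₀ hx.ne']
    congr 1
    push_cast
    ring
  rw [key]
  ring

lemma recR (ha : 0 < a) (hc : 0 < c) (m j : ℕ) :
    c * E a c (m+1) j = ((m:ℝ)+1-(j:ℝ)) * E a c m j + (j:ℝ) * E a c m (j+1) := by
  have h1 := ftcE ha hc m j
  have h2 := algE ha hc m j
  have h3 : (j:ℝ) * (a * E a c (m+1) (j+1)) = (j:ℝ) * (E a c m j - E a c m (j+1)) := by rw [h2]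
  nlinarith [h1, h3]

/-- FTC for the log integrals: base case. -/
lemma Mbase (ha : 0 < a) (hc : 0 < c) : c * M a c 0 = a * E a c 0 1 := by
  set F : ℝ → ℝ := fun y => Real.log (1 + a * y) * Real.exp (-c * y) with hF
  set D : ℝ → ℝ := fun y => a * EI a c 0 1 y - c * LI a c 0 y with hD
  have hderiv : ∀ y ∈ Ici (0:ℝ), HasDerivAt F (D y) y := by
    intro y hy
    have h1 := (hd_log ha hy).mul (hd_exp (c := c) y)
    refine h1.congr_deriv ?_
    simp only [hD, EI, LI]
    push_cast
    ring
  have htop : Tendsto F atTop (nhds 0) := by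
    have := tendsto_mul_exp hc (fun y => Real.log (1 + a * y) * y ^ 0) a (0+1) (bound_LI ha 0)
    apply this.congr
    intro y; simp [hF]
  have hint : IntegrableOn D (Ioi (0:ℝ)) :=
    ((integrableOn_EI ha hc 0 1).const_mul _).sub ((integrableOn_LI ha hc 0).const_mul _)
  have hFTC := integral_Ioi_of_hasDerivAt_of_tendsto' (fun y hy => hderiv y hy) hint htop
  have hF0 : F 0 = 0 := by simp [hF]
  rw [hF0, sub_zero] at hFTC
  have hsplit : ∫ y in Ioi (0:ℝ), D y = a * E a c 0 1 - c * M a c 0 := by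
    simp only [hD]
    rw [integral_sub ((integrableOn_EI ha hc 0 1).const_mul _)
      ((integrableOn_LI ha hc 0).const_mul _),
      MeasureTheory.integral_const_mul, MeasureTheory.integral_const_mul]
    rfl
  rw [hFTC] at hsplit
  linarith

/-- FTC for the log integrals: step. -/
lemma ftcM (ha : 0 < a) (hc : 0 < c) (m : ℕ) :
    c * M a c (m+1) = ((m:ℝ)+1) * M a c m + a * E a c (m+1) 1 := by
  set F : ℝ → ℝ := fun y => y ^ (m+1) * Real.log (1 + a * y) * Real.exp (-c * y) with hF
  set D : ℝ → ℝ := fun y =>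
    ((m:ℝ)+1) * LI a c m y + a * EI a c (m+1) 1 y - c * LI a c (m+1) y with hD
  have hderiv : ∀ y ∈ Ici (0:ℝ), HasDerivAt F (D y) y := by
    intro y hy
    have h1 := ((hasDerivAt_pow (m+1) y).mul (hd_log ha hy)).mul (hd_exp (c := c) y)
    refine h1.congr_deriv ?_
    simp only [hD, EI, LI, Pi.mul_apply]
    push_cast
    ring
  have htop : Tendsto F atTop (nhds 0) := by
    have hb : ∀ y : ℝ, 0 ≤ y → |y ^ (m+1) * Real.log (1 + a * y)| ≤ a * (1 + y) ^ (m+1+1) := by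
      intro y hy
      have := bound_LI ha (m+1) y hy
      rwa [abs_mul, mul_comm, ← abs_mul] at this
    exact tendsto_mul_exp hc (fun y => y ^ (m+1) * Real.log (1 + a * y)) a (m+1+1) hb
  have hint : IntegrableOn D (Ioi (0:ℝ)) :=
    (((integrableOn_LI ha hc m).const_mul _).add
      ((integrableOn_EI ha hc (m+1) 1).const_mul _)).sub
      ((integrableOn_LI ha hc (m+1)).const_mul _)
  have hFTC := integral_Ioi_of_hasDerivAt_of_tendsto' (fun y hy => hderiv y hy) hint htop
  have hF0 : F 0 = 0 := by simp [hF]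
  rw [hF0, sub_zero] at hFTC
  have hsplit : ∫ y in Ioi (0:ℝ), D y
      = ((m:ℝ)+1) * M a c m + a * E a c (m+1) 1 - c * M a c (m+1) := by
    simp only [hD]
    have i1 : IntegrableOn (fun y => ((m:ℝ)+1) * LI a c m y) (Ioi (0:ℝ)) :=
      (integrableOn_LI ha hc m).const_mul _
    have i2 : IntegrableOn (fun y => a * EI a c (m+1) 1 y) (Ioi (0:ℝ)) :=
      (integrableOn_EI ha hc (m+1) 1).const_mul _
    have i3 : IntegrableOn (fun y => c * LI a c (m+1) y) (Ioi (0:ℝ)) :=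
      (integrableOn_LI ha hc (m+1)).const_mul _
    have i12 : IntegrableOn
        (fun y => ((m:ℝ)+1) * LI a c m y + a * EI a c (m+1) 1 y) (Ioi (0:ℝ)) := i1.add i2
    rw [integral_sub i12 i3, integral_add i1 i2,
      MeasureTheory.integral_const_mul, MeasureTheory.integral_const_mul,
      MeasureTheory.integral_const_mul]
    rfl
  rw [hFTC] at hsplit
  linarith


/-- Coefficients in the expansion of `c^m E m j` in terms of `E 0 (j+i)`. -/
noncomputable def coeff (m i : ℕ) (j : ℝ) : ℝ :=
  (-1:ℝ) ^ (m + i) * (m.choose i) * ∏ t ∈ Finset.range m, (j + i - 1 - t)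

lemma coeff_top (m : ℕ) (j : ℝ) : coeff m (m+1) j = 0 := by
  simp [coeff, Nat.choose_succ_self]

lemma coeff_rec_zero (m : ℕ) (j : ℝ) :
    coeff (m+1) 0 j = ((m:ℝ)+1-j) * coeff m 0 j := by
  simp only [coeff, Finset.prod_range_succ, Nat.choose_zero_right]
  push_cast
  ring

lemma choose_cast_key (m i : ℕ) :
    ((i:ℝ)+1) * (m.choose (i+1)) = ((m:ℝ) - i) * (m.choose i) := by
  rcases le_or_gt i m with h | h
  · have := Nat.choose_succ_right_eq m i
    have hcast : ((m.choose (i+1) * (i+1) : ℕ) : ℝ) = ((m.choose i * (m - i) : ℕ) : ℝ) := by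
      exact_mod_cast congrArg (Nat.cast : ℕ → ℝ) this
    push_cast [Nat.cast_sub h] at hcast
    linarith
  · rw [Nat.choose_eq_zero_of_lt h, Nat.choose_eq_zero_of_lt (by omega)]
    simp

lemma coeff_rec_succ (m i : ℕ) (j : ℝ) :
    coeff (m+1) (i+1) j = ((m:ℝ)+1-j) * coeff m (i+1) j + j * coeff m i (j+1) := by
  simp only [coeff, Finset.prod_range_succ, Nat.choose_succ_succ]
  have hprod : ∀ t : ℕ, (j + 1 + (i:ℝ) - 1 - t) = (j + ((i:ℝ)+1) - 1 - t) := by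
    intro t; ring
  have hP : (∏ t ∈ Finset.range m, (j + 1 + (i:ℝ) - 1 - t))
      = ∏ t ∈ Finset.range m, (j + ((i:ℝ)+1) - 1 - t) := by
    apply Finset.prod_congr rfl
    intro t _; ring
  push_cast
  rw [hP]
  set P : ℝ := ∏ t ∈ Finset.range m, (j + ((i:ℝ)+1) - 1 - t) with hPdef
  linear_combination ((-1:ℝ)^(m+i) * P) * choose_cast_key m i


lemma E_formula (ha : 0 < a) (hc : 0 < c) (m : ℕ) : ∀ j : ℕ,
    c ^ m * E a c m j = ∑ i ∈ Finset.range (m+1), coeff m i (j:ℝ) * E a c 0 (j+i) := by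
  induction m with
  | zero =>
      intro j
      simp [coeff]
  | succ m ih =>
      intro j
      have hR := recR ha hc m j
      have step1 : c ^ (m+1) * E a c (m+1) j
          = ((m:ℝ)+1-(j:ℝ)) * (c ^ m * E a c m j) + (j:ℝ) * (c ^ m * E a c m (j+1)) := by
        have : c ^ (m+1) * E a c (m+1) j = c ^ m * (c * E a c (m+1) j) := by ring
        rw [this, hR]; ring
      rw [step1, ih j, ih (j+1)]
      rw [Finset.sum_range_succ' (fun i => coeff (m+1) i (j:ℝ) * E a c 0 (j+i)) (m+1)]
      have hrw : ∀ i ∈ Finset.range (m+1),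
          coeff (m+1) (i+1) (j:ℝ) * E a c 0 (j+(i+1))
            = ((m:ℝ)+1-(j:ℝ)) * (coeff m (i+1) (j:ℝ) * E a c 0 (j+(i+1)))
              + (j:ℝ) * (coeff m i ((j:ℝ)+1) * E a c 0 ((j+1)+i)) := by
        intro i _
        rw [coeff_rec_succ]
        have : (j+1)+i = j+(i+1) := by omega
        rw [this]
        ring
      rw [Finset.sum_congr rfl hrw, Finset.sum_add_distrib]
      rw [coeff_rec_zero]
      have h1 : ∑ i ∈ Finset.range (m+1),
          ((m:ℝ)+1-(j:ℝ)) * (coeff m (i+1) (j:ℝ) * E a c 0 (j+(i+1)))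
          = ((m:ℝ)+1-(j:ℝ)) * ∑ i ∈ Finset.range (m+1),
              coeff m (i+1) (j:ℝ) * E a c 0 (j+(i+1)) := by
        rw [Finset.mul_sum]
      have h2 : ∑ i ∈ Finset.range (m+1),
          (j:ℝ) * (coeff m i ((j:ℝ)+1) * E a c 0 ((j+1)+i))
          = (j:ℝ) * ∑ i ∈ Finset.range (m+1), coeff m i ((j:ℝ)+1) * E a c 0 ((j+1)+i) := by
        rw [Finset.mul_sum]
      rw [h1, h2]
      have h3 : ∑ i ∈ Finset.range (m+1), coeff m (i+1) (j:ℝ) * E a c 0 (j+(i+1))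
          = ∑ i ∈ Finset.range m, coeff m (i+1) (j:ℝ) * E a c 0 (j+(i+1)) := by
        rw [Finset.sum_range_succ, coeff_top]
        simp
      have h4 : ∑ i ∈ Finset.range (m+1), coeff m i (j:ℝ) * E a c 0 (j+i)
          = (∑ i ∈ Finset.range m, coeff m (i+1) (j:ℝ) * E a c 0 (j+(i+1)))
            + coeff m 0 (j:ℝ) * E a c 0 (j+0) := by
        rw [Finset.sum_range_succ' (fun i => coeff m i (j:ℝ) * E a c 0 (j+i)) m]
      have hj1 : ((j+1:ℕ):ℝ) = (j:ℝ)+1 := by push_cast; ring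
      rw [h3, h4, hj1]
      simp only [Nat.add_zero]
      ring

lemma prod_m_sub (m : ℕ) : (∏ t ∈ Finset.range m, ((m:ℝ) - t)) = m.factorial := by
  have h1 : ∀ t ∈ Finset.range m, ((m:ℝ) - t) = ((m - t : ℕ) : ℝ) := by
    intro t ht
    rw [Finset.mem_range] at ht
    rw [Nat.cast_sub (le_of_lt ht)]
  rw [Finset.prod_congr rfl h1, ← Nat.cast_prod]
  congr 1
  have h2 := Finset.prod_range_reflect (fun j => j + 1) m
  rw [Finset.prod_range_add_one_eq_factorial] at h2
  rw [← h2]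
  apply Finset.prod_congr rfl
  intro t ht
  rw [Finset.mem_range] at ht
  omega

lemma coeff_one_lt (m i : ℕ) (h : i < m) : coeff m i 1 = 0 := by
  simp only [coeff]
  have : ∏ t ∈ Finset.range m, ((1:ℝ) + i - 1 - t) = 0 := by
    apply Finset.prod_eq_zero (Finset.mem_range.2 h)
    ring
  rw [this]
  ring

lemma coeff_diag (m : ℕ) : coeff m m 1 = m.factorial := by
  simp only [coeff, Nat.choose_self]
  have h1 : ∏ t ∈ Finset.range m, ((1:ℝ) + m - 1 - t) = ∏ t ∈ Finset.range m, ((m:ℝ) - t) := by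
    apply Finset.prod_congr rfl; intro t _; ring
  rw [h1, prod_m_sub]
  have : (-1:ℝ) ^ (m + m) = 1 := by
    rw [pow_add, ← mul_pow]
    norm_num
  rw [this]
  ring

/-- Key identity `c^m E m 1 = m! * E 0 (m+1)`. -/
lemma E_dagger (ha : 0 < a) (hc : 0 < c) (m : ℕ) :
    c ^ m * E a c m 1 = (m.factorial : ℝ) * E a c 0 (m+1) := by
  rw [E_formula ha hc m 1]
  rw [show ((1:ℕ):ℝ) = (1:ℝ) from Nat.cast_one]
  rw [Finset.sum_eq_single m]
  · rw [coeff_diag]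
    norm_num [Nat.add_comm]
  · intro i hi hne
    rw [Finset.mem_range] at hi
    have : i < m := by omega
    rw [coeff_one_lt m i this]
    ring
  · intro h
    exact absurd (Finset.self_mem_range_succ m) h


lemma M_formula (ha : 0 < a) (hc : 0 < c) (m : ℕ) :
    M a c m = (m.factorial : ℝ) * a / c ^ (m+1) * ∑ j ∈ Finset.Icc 1 (m+1), E a c 0 j := by
  induction m with
  | zero =>
      have h := Mbase ha hc
      have : Finset.Icc 1 1 = {1} := rfl
      rw [this]
      simp only [Finset.sum_singleton, Nat.factorial_zero, Nat.cast_one, pow_one]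
      field_simp
      simp only [zero_add, pow_one]
      linarith
  | succ m ih =>
      have h1 := ftcM ha hc m
      have h2 := E_dagger ha hc (m+1)
      -- E a c (m+1) 1 = (m+1)! / c^(m+1) * E a c 0 (m+2)
      have hcpow : (0:ℝ) < c ^ (m+1) := pow_pos hc _
      have h3 : E a c (m+1) 1 = ((m+1).factorial : ℝ) / c ^ (m+1) * E a c 0 (m+2) := by
        field_simp
        linarith [h2]
      have hsum : ∑ j ∈ Finset.Icc 1 (m+1+1), E a c 0 j
          = (∑ j ∈ Finset.Icc 1 (m+1), E a c 0 j) + E a c 0 (m+2) := by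
        rw [Finset.sum_Icc_succ_top (by omega : 1 ≤ m+1+1)]
      rw [hsum]
      have hcm2 : (0:ℝ) < c ^ (m+2) := pow_pos hc _
      have hfact : ((m+1).factorial : ℝ) = ((m:ℝ)+1) * (m.factorial : ℝ) := by
        rw [Nat.factorial_succ]; push_cast; ring
      -- from h1 : c * M (m+1) = (m+1) * M m + a * E (m+1) 1
      have : M a c (m+1) = (((m:ℝ)+1) * M a c m + a * E a c (m+1) 1) / c := by
        field_simp
        linarith
      rw [this, ih, h3, hfact]
      field_simp
      ring


lemma gammaCV (ha : 0 < a) (hc : 0 < c) (r : ℝ) :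
    ∫ t in Ioi (c/a), t ^ r * Real.exp (-t)
      = (c * (c/a) ^ r * Real.exp (-(c/a)))
          * ∫ y in Ioi (0:ℝ), (1 + a * y) ^ r * Real.exp (-c * y) := by
  have hca : 0 < c / a := div_pos hc ha
  have himg : (fun y : ℝ => c/a + c * y) '' (Ioi 0) = Ioi (c/a) := by
    ext t
    simp only [mem_image, mem_Ioi]
    constructor
    · rintro ⟨y, hy, rfl⟩
      nlinarith
    · intro ht
      refine ⟨(t - c/a)/c, ?_, ?_⟩
      · have : 0 < t - c/a := by linarith
        positivity
      · field_simp
        ring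
  have hderiv : ∀ y ∈ Ioi (0:ℝ),
      HasDerivWithinAt (fun y : ℝ => c/a + c * y) c (Ioi 0) y := by
    intro y _
    have h := (((hasDerivAt_id y).const_mul c).const_add (c/a)).hasDerivWithinAt
      (s := Ioi (0:ℝ))
    simpa using h
  have hinj : InjOn (fun y : ℝ => c/a + c * y) (Ioi 0) := by
    intro x _ y _ h
    simp only at h
    have := hc.ne'
    have := mul_left_cancel₀ hc.ne' (by linarith : c * x = c * y)
    exact this
  have := integral_image_eq_integral_abs_deriv_smul measurableSet_Ioi hderiv hinj
    (fun t => t ^ r * Real.exp (-t))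
  rw [himg] at this
  rw [this]
  rw [← MeasureTheory.integral_const_mul]
  apply setIntegral_congr_fun measurableSet_Ioi
  intro y hy
  have hy' : (0:ℝ) ≤ y := le_of_lt hy
  have hb := base_pos ha hy'
  simp only [smul_eq_mul]
  have hsub : c/a + c * y = (c/a) * (1 + a * y) := by
    field_simp
  rw [hsub, abs_of_pos hc]
  rw [Real.mul_rpow hca.le (by linarith : (0:ℝ) ≤ 1 + a * y)]
  have hexp : Real.exp (-(c/a * (1 + a * y))) = Real.exp (-(c/a)) * Real.exp (-c * y) := by
    rw [← Real.exp_add]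
    congr 1
    field_simp
    ring
  rw [hexp]
  ring


lemma term_eval (ha : 0 < a) (hc : 0 < c) (m k : ℕ) (hk1 : 1 ≤ k) (hk2 : k ≤ m+1) :
    Real.exp (c/a) * ((1 / (c ^ k * a ^ (m+1-k)))
        * ∫ t in Ioi (c/a), t ^ ((k:ℝ) - ((m+1:ℕ):ℝ) - 1) * Real.exp (-t))
      = a / c ^ (m+1) * E a c 0 (m+2-k) := by
  set r : ℝ := (k:ℝ) - ((m+1:ℕ):ℝ) - 1 with hr
  set p : ℕ := m+2-k with hp
  have hpr : r = ((-(p:ℤ) : ℤ) : ℝ) := by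
    rw [hr, hp]
    push_cast [Nat.cast_sub (by omega : k ≤ m+2)]
    ring
  have hca : 0 < c / a := div_pos hc ha
  rw [gammaCV ha hc r]
  have hEint : (∫ y in Ioi (0:ℝ), (1 + a * y) ^ r * Real.exp (-c * y)) = E a c 0 p := by
    apply setIntegral_congr_fun measurableSet_Ioi
    intro y hy
    have hy' : (0:ℝ) ≤ y := le_of_lt hy
    have hb := base_pos ha hy'
    simp only [EI]
    rw [hpr, Real.rpow_intCast]
    ring
  rw [hEint]
  -- now pure algebra for the coefficient
  have hcar : (c/a) ^ r = (c ^ p / a ^ p)⁻¹ := by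
    rw [hpr, Real.rpow_intCast, zpow_neg, zpow_natCast, div_pow]
  set q : ℕ := m+1-k with hq
  have hpq : p = q + 1 := by omega
  have hkq : k + q = m + 1 := by omega
  have hcm : c ^ (m+1) = c ^ k * c ^ q := by rw [← pow_add, hkq]
  rw [hcar, hpq, hcm, Real.exp_neg, inv_div]
  have hc0 : (c:ℝ) ≠ 0 := hc.ne'
  have ha0 : (a:ℝ) ≠ 0 := ha.ne'
  have he0 : Real.exp (c/a) ≠ 0 := Real.exp_ne_zero _
  field_simp
  ring

end IntegralLogAux

open IntegralLogAux

/-- The integral identity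
`∫₀^∞ ln(1+ay) y^{n-1} e^{-cy} dy
  = (n-1)! e^{c/a} ∑_{k=1}^{n} Γ(-n+k, c/a) / (c^k a^{n-k})`,
with the upper incomplete gamma function written as an explicit integral. -/
theorem integral_log_mul_pow_mul_exp
    (n : ℕ) (hn : 1 ≤ n) (a c : ℝ) (ha : 0 < a) (hc : 0 < c) :
    ∫ y in Ioi (0 : ℝ), Real.log (1 + a * y) * y ^ (n - 1) * Real.exp (-c * y)
      = (Nat.factorial (n - 1) : ℝ) * Real.exp (c / a)
          * ∑ k ∈ Finset.Icc 1 n,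
              (1 / (c ^ k * a ^ (n - k)))
                * ∫ t in Ioi (c / a), t ^ ((k : ℝ) - n - 1) * Real.exp (-t) := by
  obtain ⟨m, rfl⟩ : ∃ m, n = m + 1 := ⟨n - 1, by omega⟩
  have hL : (∫ y in Ioi (0:ℝ), Real.log (1 + a * y) * y ^ (m+1-1) * Real.exp (-c * y))
      = M a c m := rfl
  rw [hL, M_formula ha hc m]
  have hsum : Real.exp (c/a) * ∑ k ∈ Finset.Icc 1 (m+1),
        (1 / (c ^ k * a ^ (m+1-k)))
          * ∫ t in Ioi (c/a), t ^ ((k:ℝ) - ((m+1:ℕ):ℝ) - 1) * Real.exp (-t)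
      = ∑ k ∈ Finset.Icc 1 (m+1), a / c ^ (m+1) * E a c 0 (m+2-k) := by
    rw [Finset.mul_sum]
    apply Finset.sum_congr rfl
    intro k hk
    rw [Finset.mem_Icc] at hk
    exact term_eval ha hc m k hk.1 hk.2
  have hrefl : ∑ k ∈ Finset.Icc 1 (m+1), a / c ^ (m+1) * E a c 0 (m+2-k)
      = ∑ j ∈ Finset.Icc 1 (m+1), a / c ^ (m+1) * E a c 0 j := by
    apply Finset.sum_nbij' (fun k => m+2-k) (fun k => m+2-k)
    · intro x hx; rw [Finset.mem_Icc] at *; omega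
    · intro x hx; rw [Finset.mem_Icc] at *; omega
    · intro x hx; rw [Finset.mem_Icc] at hx; omega
    · intro x hx; rw [Finset.mem_Icc] at hx; omega
    · intro x hx; rfl
  rw [mul_assoc, hsum, hrefl, ← Finset.mul_sum]
  have hfact : Nat.factorial (m+1-1) = Nat.factorial m := rfl
  rw [hfact]
  ring
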